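/- Let M be a simple modular matroid of rank r. Then the opposite lattice L(M)^op of the lattice of flats of M is isomorphic to the extension lattice E(M) of M, via the map sending a flat X to the set H_X(M) = {H a hyperplane of M : X ⊆ H}. -/

import Mathlib

open Set Matroid
open scoped Matroid

namespace AdjointPaper

variable {α β γ : Type*}

/-- The rank of a set `X` in a matroid `M`: the supremum of cardinalities of
independent subsets of `X`. -/
noncomputable def mrank (M : Matroid α) (X : Set α) : ℕ :=
  sSup (Set.ncard '' {I | M.Indep I ∧ I ⊆ X})

/-- The rank of a matroid. -/
noncomputable def mrk (M : Matroid α) : ℕ := mrank M M.E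

/-- A hyperplane of `M`: a coatom of the lattice of flats. -/
def IsHyperplane (M : Matroid α) (H : Set α) : Prop :=
  M.IsFlat H ∧ H ≠ M.E ∧ ∀ F, M.IsFlat F → H ⊂ F → F = M.E

/-- An atom of the lattice of flats of `M`. -/
def IsFlatAtom (M : Matroid α) (P : Set α) : Prop :=
  M.IsFlat P ∧ M.closure ∅ ⊂ P ∧ ∀ F, M.IsFlat F → M.closure ∅ ⊂ F → F ⊆ P → F = P

/-- `e` is a loop of `M`. -/
def IsLoop (M : Matroid α) (e : α) : Prop := e ∈ M.E ∧ ¬ M.Indep {e}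

/-- `M` is loopless. -/
def Loopless (M : Matroid α) : Prop := ∀ e ∈ M.E, M.Indep {e}

/-- `M` is simple: loopless and with no two parallel elements. -/
def Simple (M : Matroid α) : Prop :=
  (∀ e ∈ M.E, M.Indep {e}) ∧
    ∀ e ∈ M.E, ∀ f ∈ M.E, M.closure {e} = M.closure {f} → e = f

/-- `φ` is an adjoint map from `M` to `N`: an injective, order-reversing map on
flats taking hyperplanes of `M` bijectively onto the atoms of `N`, with
`N` of the same rank as `M`. -/
structure IsAdjointMap (M : Matroid α) (N : Matroid β) (φ : Set α → Set β) : Prop where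
  rank_eq : mrk N = mrk M
  flat : ∀ ⦃F⦄, M.IsFlat F → N.IsFlat (φ F)
  inj : ∀ ⦃F F'⦄, M.IsFlat F → M.IsFlat F' → φ F = φ F' → F = F'
  antitone : ∀ ⦃F F'⦄, M.IsFlat F → M.IsFlat F' → F ⊆ F' → φ F' ⊆ φ F
  hyper_atom : ∀ ⦃H⦄, IsHyperplane M H → IsFlatAtom N (φ H)
  atom_surj : ∀ ⦃P⦄, IsFlatAtom N P → ∃ H, IsHyperplane M H ∧ φ H = P

/-- `N` is an adjoint of `M`. -/
def IsAdjoint (M : Matroid α) (N : Matroid β) : Prop := ∃ φ, IsAdjointMap M N φ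

/-- Isomorphism of matroids. -/
def Iso (M : Matroid α) (N : Matroid β) : Prop :=
  ∃ f : α → β, Set.BijOn f M.E N.E ∧ ∀ I ⊆ M.E, (M.Indep I ↔ N.Indep (f '' I))

/-- Connectedness: `M` has nonempty ground set and is not a direct sum of two
matroids on nonempty ground sets. -/
def Conn (M : Matroid α) : Prop :=
  M.E.Nonempty ∧ ∀ (N₁ N₂ : Matroid α) (h : Disjoint N₁.E N₂.E),
    N₁.E.Nonempty → N₂.E.Nonempty → M ≠ Matroid.disjointSum N₁ N₂ h

/-- A circuit of `M`: a minimal dependent set. -/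
def IsCircuit (M : Matroid α) (C : Set α) : Prop :=
  C ⊆ M.E ∧ ¬ M.Indep C ∧ ∀ D, D ⊂ C → M.Indep D

/-- `K` is a connected component of `M`. -/
def ConnComponent (M : Matroid α) (K : Set α) : Prop :=
  K ⊆ M.E ∧ K.Nonempty ∧ Conn (M ↾ K) ∧
    ∀ C, IsCircuit M C → C ⊆ K ∨ Disjoint C K

/-- `M` is a modular matroid: every pair of flats is a modular pair. -/
def Modular (M : Matroid α) : Prop :=
  ∀ F F', M.IsFlat F → M.IsFlat F' →
    mrank M (M.closure (F ∪ F')) + mrank M (F ∩ F') = mrank M F + mrank M F'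

/-- The lattice of flats of `N` is isomorphic to the opposite of the lattice of
flats of `M`. -/
def FlatOpIso (M : Matroid α) (N : Matroid β) : Prop :=
  ∃ ψ : Set α → Set β, (∀ F, M.IsFlat F → N.IsFlat (ψ F)) ∧
    (∀ F F', M.IsFlat F → M.IsFlat F' → (F ⊆ F' ↔ ψ F' ⊆ ψ F)) ∧
    ∀ G, N.IsFlat G → ∃ F, M.IsFlat F ∧ ψ F = G

/-- A linear subclass of `M`: a set of hyperplanes closed under the hyperplanes
through a comodular intersection of two of its members. The lattice of all
linear subclasses ordered by inclusion is the extension lattice `E(M)`. -/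
def LinearSubclass (M : Matroid α) (S : Set (Set α)) : Prop :=
  (∀ H ∈ S, IsHyperplane M H) ∧
    ∀ H₁ ∈ S, ∀ H₂ ∈ S, mrank M (H₁ ∩ H₂) = mrk M - 2 →
      ∀ H₃, IsHyperplane M H₃ → H₁ ∩ H₂ ⊆ H₃ → H₃ ∈ S

/-- `N` is (isomorphic to) the projective geometry `PG (r-1, F)`, via a
representation `f` hitting every point of the projective space exactly once. -/
def IsProjGeomRep (N : Matroid β) (r : ℕ) (F : Type*) [Field F] : Prop :=
  ∃ f : β → (Fin r → F),
    (∀ e ∈ N.E, f e ≠ 0) ∧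
    (∀ e ∈ N.E, ∀ e' ∈ N.E,
      Submodule.span F {f e} = Submodule.span F {f e'} → e = e') ∧
    (∀ v : Fin r → F, v ≠ 0 → ∃ e ∈ N.E, Submodule.span F {f e} = Submodule.span F {v}) ∧
    ∀ I, I ⊆ N.E → (N.Indep I ↔ LinearIndependent F (fun x : I => f x.1))

/-- `N` is (isomorphic to) the finite projective geometry `PG (r-1, q)`. -/
def IsProjGeom (N : Matroid β) (r q : ℕ) : Prop :=
  ∃ (F : Type) (instF : Field F) (instT : Fintype F),
    @Fintype.card F instT = q ∧ @IsProjGeomRep _ N r F instF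

/-- `M` is a projective plane: a simple rank-3 matroid in which every line has
at least three points and every two lines meet. -/
def IsProjPlane (M : Matroid α) : Prop :=
  Simple M ∧ mrk M = 3 ∧
    (∀ L, M.IsFlat L → mrank M L = 2 → 3 ≤ L.ncard) ∧
    ∀ L L', M.IsFlat L → M.IsFlat L' → mrank M L = 2 → mrank M L' = 2 → (L ∩ L').Nonempty

/-- `N` is (isomorphic to) the uniform matroid `U_{r,m}`. -/
def IsUnif (N : Matroid β) (r m : ℕ) : Prop :=
  N.E.Finite ∧ N.E.ncard = m ∧ ∀ I, I ⊆ N.E → (N.Indep I ↔ I.Finite ∧ I.ncard ≤ r)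

section Aux

variable {M : Matroid α} {X Y F F' H I J : Set α}

lemma flat_closure (M : Matroid α) (X : Set α) : M.IsFlat (M.closure X) := by
  rw [closure_def, sInter_eq_iInter]
  have : Nonempty {F // F ∈ {F | M.IsFlat F ∧ X ∩ M.E ⊆ F}} :=
    ⟨⟨M.E, M.ground_isFlat, inter_subset_right⟩⟩
  exact Matroid.IsFlat.iInter fun F => F.2.1

lemma flat_inter (hF : M.IsFlat F) (hF' : M.IsFlat F') : M.IsFlat (F ∩ F') := by
  rw [inter_eq_iInter]
  exact Matroid.IsFlat.iInter (by rintro (_|_) <;> assumption)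

lemma ncard_le_of_basis [M.Finite] (hI : M.IsBasis I X) (hJ : M.Indep J) (hJX : J ⊆ X) :
    J.ncard ≤ I.ncard := by
  obtain ⟨J', hJ', hJJ'⟩ := hJ.subset_isBasis_of_subset hJX hI.subset_ground
  have h1 : J.ncard ≤ J'.ncard :=
    Set.ncard_le_ncard hJJ' (M.set_finite J' hJ'.left_subset_ground)
  have h2 : J'.ncard = I.ncard :=
    (hJ'.restrict_isBase).ncard_eq_ncard_of_isBase (hI.restrict_isBase)
  omega

lemma mrank_eq_ncard_of_basis [M.Finite] (hI : M.IsBasis I X) : mrank M X = I.ncard := by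
  refine le_antisymm (csSup_le ⟨I.ncard, ⟨I, ⟨hI.indep, hI.subset⟩, rfl⟩⟩ ?_)
    (le_csSup ⟨I.ncard, ?_⟩ ⟨I, ⟨hI.indep, hI.subset⟩, rfl⟩)
  · rintro n ⟨J, ⟨hJ, hJX⟩, rfl⟩
    exact ncard_le_of_basis hI hJ hJX
  · rintro n ⟨J, ⟨hJ, hJX⟩, rfl⟩
    exact ncard_le_of_basis hI hJ hJX

lemma ncard_le_mrank [M.Finite] (hJ : M.Indep J) (hJX : J ⊆ X) (hX : X ⊆ M.E) :
    J.ncard ≤ mrank M X := by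
  obtain ⟨I, hI⟩ := M.exists_isBasis X hX
  rw [mrank_eq_ncard_of_basis hI]
  exact ncard_le_of_basis hI hJ hJX

lemma mrank_mono [M.Finite] (hXY : X ⊆ Y) (hY : Y ⊆ M.E) : mrank M X ≤ mrank M Y := by
  obtain ⟨I, hI⟩ := M.exists_isBasis X (hXY.trans hY)
  rw [mrank_eq_ncard_of_basis hI]
  exact ncard_le_mrank hI.indep (hI.subset.trans hXY) hY

lemma mrank_closure_eq [M.Finite] (hX : X ⊆ M.E) : mrank M (M.closure X) = mrank M X := by
  obtain ⟨I, hI⟩ := M.exists_isBasis X hX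
  rw [mrank_eq_ncard_of_basis hI, mrank_eq_ncard_of_basis hI.isBasis_closure_right]

lemma mrk_eq_ncard_base [M.Finite] {B : Set α} (hB : M.IsBase B) : mrk M = B.ncard :=
  mrank_eq_ncard_of_basis hB.isBasis_ground

lemma mrank_le_mrk [M.Finite] (hX : X ⊆ M.E) : mrank M X ≤ mrk M :=
  mrank_mono hX Subset.rfl

lemma mrank_lt_of_flat_ssubset [M.Finite] (hF : M.IsFlat F) (hss : F ⊂ X) (hX : X ⊆ M.E) :
    mrank M F + 1 ≤ mrank M X := by
  obtain ⟨I, hI⟩ := M.exists_isBasis F hF.subset_ground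
  obtain ⟨x, hxX, hxF⟩ := exists_of_ssubset hss
  have hxE : x ∈ M.E := hX hxX
  have hxI : x ∉ M.closure I := by
    rw [hI.closure_eq_closure, hF.closure]; exact hxF
  have hxnI : x ∉ I := fun h => hxF (hI.subset h)
  have hind : M.Indep (insert x I) := hI.indep.insert_indep_iff.mpr (Or.inl ⟨hxE, hxI⟩)
  have hsub : insert x I ⊆ X := insert_subset hxX (hI.subset.trans hss.subset)
  have hcard : (insert x I).ncard = I.ncard + 1 :=
    Set.ncard_insert_of_notMem hxnI (M.set_finite I hI.left_subset_ground)
  have := ncard_le_mrank hind hsub hX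
  rw [mrank_eq_ncard_of_basis hI]
  omega

lemma flat_eq_of_subset_mrank_le [M.Finite] (hF : M.IsFlat F) (hF' : F' ⊆ M.E)
    (hss : F ⊆ F') (hle : mrank M F' ≤ mrank M F) : F = F' := by
  by_contra hne
  have := mrank_lt_of_flat_ssubset hF (hss.ssubset_of_ne hne) hF'
  omega

lemma flat_eq_ground_of_mrk_le [M.Finite] (hF : M.IsFlat F) (hle : mrk M ≤ mrank M F) :
    F = M.E :=
  flat_eq_of_subset_mrank_le hF Subset.rfl hF.subset_ground hle

lemma hyperplane_of_flat_mrank [M.Finite] (hF : M.IsFlat F) (hrk : mrank M F + 1 = mrk M) :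
    IsHyperplane M F := by
  refine ⟨hF, fun h => by rw [h, mrk] at hrk; omega, ?_⟩
  intro G hG hss
  have h1 := mrank_lt_of_flat_ssubset hF hss hG.subset_ground
  exact flat_eq_ground_of_mrk_le hG (by omega)

lemma IsHyperplane.mrank_add_one [M.Finite] (hH : IsHyperplane M H) :
    mrank M H + 1 = mrk M := by
  obtain ⟨I, hI⟩ := M.exists_isBasis H hH.1.subset_ground
  obtain ⟨x, hxE, hxH⟩ := exists_of_ssubset
    (hH.1.subset_ground.ssubset_of_ne hH.2.1)
  have hxI : x ∉ M.closure I := by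
    rw [hI.closure_eq_closure, hH.1.closure]; exact hxH
  have hxnI : x ∉ I := fun h => hxH (hI.subset h)
  have hind : M.Indep (insert x I) := hI.indep.insert_indep_iff.mpr (Or.inl ⟨hxE, hxI⟩)
  have hclE : M.closure (insert x I) = M.E := by
    refine hH.2.2 _ (flat_closure M _) (ssubset_of_subset_of_ne ?_ ?_)
    · have h1 : H ⊆ M.closure I := by rw [hI.closure_eq_closure, hH.1.closure]
      exact h1.trans (M.closure_subset_closure (subset_insert _ _))
    · intro h
      exact hxH (h ▸ (M.subset_closure _ hind.subset_ground (mem_insert _ _)))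
  have hcard : (insert x I).ncard = I.ncard + 1 :=
    Set.ncard_insert_of_notMem hxnI (M.set_finite I hI.left_subset_ground)
  have h2 : mrank M (M.closure (insert x I)) = (insert x I).ncard :=
    mrank_eq_ncard_of_basis hind.isBasis_closure
  rw [hclE] at h2
  rw [mrank_eq_ncard_of_basis hI]
  have : mrk M = mrank M M.E := rfl
  omega

lemma hyperplane_eq_of_subset (h1 : IsHyperplane M F) (h2 : IsHyperplane M H)
    (hss : F ⊆ H) : F = H := by
  by_contra hne
  exact h2.2.1 (h1.2.2 H h2.1 (hss.ssubset_of_ne hne))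

lemma exists_hyperplane_sep [M.Finite] (hF : M.IsFlat F) {x : α} (hxE : x ∈ M.E)
    (hxF : x ∉ F) : ∃ H, IsHyperplane M H ∧ F ⊆ H ∧ x ∉ H := by
  obtain ⟨I, hI⟩ := M.exists_isBasis F hF.subset_ground
  have hxI : x ∉ M.closure I := by
    rw [hI.closure_eq_closure, hF.closure]; exact hxF
  have hxnI : x ∉ I := fun h => hxF (hI.subset h)
  have hind : M.Indep (insert x I) := hI.indep.insert_indep_iff.mpr (Or.inl ⟨hxE, hxI⟩)
  obtain ⟨B, hB, hsub⟩ := hind.exists_isBase_superset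
  have hxB : x ∈ B := hsub (mem_insert _ _)
  refine ⟨M.closure (B \ {x}), ?_, ?_, hB.indep.notMem_closure_sdiff_of_mem hxB⟩
  · refine hyperplane_of_flat_mrank (flat_closure M _) ?_
    have h1 : mrank M (M.closure (B \ {x})) = (B \ {x}).ncard :=
      mrank_eq_ncard_of_basis (hB.indep.subset diff_subset).isBasis_closure
    have h2 : (B \ {x}).ncard + 1 = B.ncard :=
      Set.ncard_sdiff_singleton_add_one hxB (M.set_finite B hB.subset_ground)
    rw [h1, mrk_eq_ncard_base hB]; omega
  · have hIB : I ⊆ B \ {x} := fun y hy =>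
      ⟨hsub (mem_insert_of_mem _ hy), fun h => hxnI (h ▸ hy)⟩
    calc F = M.closure I := by rw [hI.closure_eq_closure, hF.closure]
    _ ⊆ _ := M.closure_subset_closure hIB

end Aux

section Main

variable {M : Matroid α} {S : Set (Set α)} {F H A B : Set α}

lemma mod_inter_hyp [M.Finite] (hmod : Modular M) (hF : M.IsFlat F) (hH : IsHyperplane M H)
    (hnss : ¬ F ⊆ H) : mrank M (F ∩ H) + 1 = mrank M F := by
  have heq := hmod F H hF hH.1
  obtain ⟨x, hxF, hxH⟩ := not_subset.mp hnss
  have hFHE : F ∪ H ⊆ M.E := union_subset hF.subset_ground hH.1.subset_ground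
  have hclE : M.closure (F ∪ H) = M.E := by
    refine hH.2.2 _ (flat_closure M _) (ssubset_of_subset_of_ne ?_ ?_)
    · exact subset_union_right.trans (M.subset_closure _ hFHE)
    · intro h
      exact hxH (h ▸ (M.subset_closure _ hFHE (Set.mem_union_left _ hxF)))
  rw [hclE] at heq
  have h1 := hH.mrank_add_one
  have h2 : mrk M = mrank M M.E := rfl
  omega

/-- Intersection of a list of sets together with the ground set. -/
def interList (M : Matroid α) : List (Set α) → Set α
  | [] => M.E
  | (A :: l) => A ∩ interList M l

lemma interList_flat {l : List (Set α)} (h : ∀ A ∈ l, M.IsFlat A) :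
    M.IsFlat (interList M l) := by
  induction l with
  | nil => exact M.ground_isFlat
  | cons A t ih =>
    exact flat_inter (h A (by simp)) (ih fun B hB => h B (by simp [hB]))

lemma interList_subset {l : List (Set α)} (h : A ∈ l) : interList M l ⊆ A := by
  induction l with
  | nil => simp at h
  | cons B t ih =>
    rcases List.mem_cons.mp h with rfl | h
    · exact inter_subset_left
    · exact inter_subset_right.trans (ih h)

lemma subclass_closed [M.Finite] (hmod : Modular M) (hS : LinearSubclass M S) :
    ∀ n (l : List (Set α)), l.length ≤ n → (∀ A ∈ l, A ∈ S) →
      ∀ H, IsHyperplane M H → interList M l ⊆ H → H ∈ S := by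
  have hground : ∀ H, IsHyperplane M H → interList M [] ⊆ H → False := by
    intro H hH hsub
    exact hH.2.1 (subset_antisymm hH.1.subset_ground hsub)
  intro n
  induction n with
  | zero =>
    intro l hlen hmem H hH hsub
    obtain rfl : l = [] := List.length_eq_zero_iff.mp (Nat.le_zero.mp hlen)
    exact (hground H hH hsub).elim
  | succ n IH =>
    intro l hlen hmem H hH hsub
    obtain _ | ⟨A, _ | ⟨B, t⟩⟩ := l
    · exact (hground H hH hsub).elim
    · have hA : A ∈ S := hmem A (by simp)
      have hAhyp := hS.1 A hA
      have hAH : A ⊆ H := fun x hx => hsub ⟨hx, hAhyp.1.subset_ground hx⟩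
      exact (hyperplane_eq_of_subset hAhyp hH hAH) ▸ hA
    · set G := interList M t with hGdef
      have hA : A ∈ S := hmem A (by simp)
      have hB : B ∈ S := hmem B (by simp)
      have hAhyp := hS.1 A hA
      have hBhyp := hS.1 B hB
      have htmem : ∀ C ∈ t, C ∈ S := fun C hC => hmem C (by simp [hC])
      have hGflat : M.IsFlat G := interList_flat fun C hC => (hS.1 C (htmem C hC)).1
      have hlen' : t.length + 2 ≤ n + 1 := by simpa using hlen
      have hFH : A ∩ (B ∩ G) ⊆ H := hsub
      by_cases hGH : G ⊆ H
      · exact IH t (by omega) htmem H hH hGH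
      by_cases hAB : A = B
      · refine IH (B :: t) (by simp only [List.length_cons]; omega)
          (fun C hC => by rcases List.mem_cons.mp hC with h | h; exacts [h ▸ hB, htmem C h]) H hH ?_
        intro x hx
        exact hFH ⟨hAB ▸ hx.1, hx⟩
      by_cases hGB : G ⊆ B
      · refine IH (A :: t) (by simp only [List.length_cons]; omega)
          (fun C hC => by rcases List.mem_cons.mp hC with h | h; exacts [h ▸ hA, htmem C h]) H hH ?_
        intro x hx
        exact hFH ⟨hx.1, hGB hx.2, hx.2⟩
      by_cases hBGA : B ∩ G ⊆ A
      · refine IH (B :: t) (by simp only [List.length_cons]; omega)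
          (fun C hC => by rcases List.mem_cons.mp hC with h | h; exacts [h ▸ hB, htmem C h]) H hH ?_
        intro x hx
        exact hFH ⟨hBGA hx, hx⟩
      have hnAB : ¬ A ⊆ B := fun h => hAB (hyperplane_eq_of_subset hAhyp hBhyp h)
      have eAB : mrank M (A ∩ B) + 1 = mrank M A := mod_inter_hyp hmod hAhyp.1 hBhyp hnAB
      have eA := hAhyp.mrank_add_one
      by_cases hABH : A ∩ B ⊆ H
      · exact hS.2 A hA B hB (by omega) H hH hABH
      -- the main construction
      have hBGflat : M.IsFlat (B ∩ G) := flat_inter hBhyp.1 hGflat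
      have eGH : mrank M (G ∩ H) + 1 = mrank M G := mod_inter_hyp hmod hGflat hH hGH
      have eGB : mrank M (G ∩ B) + 1 = mrank M G := mod_inter_hyp hmod hGflat hBhyp hGB
      have cGB : G ∩ B = B ∩ G := inter_comm _ _
      rw [cGB] at eGB
      have eBGA : mrank M ((B ∩ G) ∩ A) + 1 = mrank M (B ∩ G) :=
        mod_inter_hyp hmod hBGflat hAhyp hBGA
      have cBGA : (B ∩ G) ∩ A = A ∩ (B ∩ G) := inter_comm _ _
      rw [cBGA] at eBGA
      have hDflat : M.IsFlat (A ∩ B) := flat_inter hAhyp.1 hBhyp.1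
      have hCflat : M.IsFlat (G ∩ H) := flat_inter hGflat hH.1
      have hFflat : M.IsFlat (A ∩ (B ∩ G)) := flat_inter hAhyp.1 hBGflat
      have hmodDC := hmod (A ∩ B) (G ∩ H) hDflat hCflat
      have hDC : (A ∩ B) ∩ (G ∩ H) = A ∩ (B ∩ G) := by
        apply subset_antisymm
        · rintro x ⟨⟨ha, hb⟩, hg, -⟩; exact ⟨ha, hb, hg⟩
        · rintro x ⟨ha, hb, hg⟩; exact ⟨⟨ha, hb⟩, hg, hFH ⟨ha, hb, hg⟩⟩
      rw [hDC] at hmodDC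
      have hrkgr : mrk M = mrank M M.E := rfl
      set Hd := M.closure ((A ∩ B) ∪ (G ∩ H)) with hHd
      have hHdhyp : IsHyperplane M Hd :=
        hyperplane_of_flat_mrank (flat_closure M _) (by omega)
      have hDsub : A ∩ B ⊆ Hd :=
        subset_union_left.trans (M.subset_closure _
          (union_subset hDflat.subset_ground hCflat.subset_ground))
      have hHdS : Hd ∈ S := hS.2 A hA B hB (by omega) Hd hHdhyp hDsub
      -- W = closure (F ∪ C)
      have hmodFC := hmod (A ∩ (B ∩ G)) (G ∩ H) hFflat hCflat
      have hFC : (A ∩ (B ∩ G)) ∩ (G ∩ H) = A ∩ (B ∩ G) := by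
        apply subset_antisymm inter_subset_left
        rintro x ⟨ha, hb, hg⟩; exact ⟨⟨ha, hb, hg⟩, hg, hFH ⟨ha, hb, hg⟩⟩
      rw [hFC] at hmodFC
      set W := M.closure ((A ∩ (B ∩ G)) ∪ (G ∩ H)) with hW
      have hmodGD := hmod G (A ∩ B) hGflat hDflat
      have hGD : G ∩ (A ∩ B) = A ∩ (B ∩ G) := by
        apply subset_antisymm
        · rintro x ⟨hg, ha, hb⟩; exact ⟨ha, hb, hg⟩
        · rintro x ⟨ha, hb, hg⟩; exact ⟨hg, ha, hb⟩
      rw [hGD] at hmodGD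
      have hGDE : M.closure (G ∪ (A ∩ B)) = M.E :=
        flat_eq_ground_of_mrk_le (flat_closure M _) (by omega)
      have hGHdE : M.closure (G ∪ Hd) = M.E := by
        refine subset_antisymm (M.closure_subset_ground _) ?_
        rw [← hGDE]
        exact M.closure_subset_closure (union_subset_union_right _ hDsub)
      have hmodGHd := hmod G Hd hGflat hHdhyp.1
      rw [hGHdE] at hmodGHd
      have eHd := hHdhyp.mrank_add_one
      have hWsub : W ⊆ G ∩ Hd := by
        refine subset_inter ?_ ?_
        · have h1 : (A ∩ (B ∩ G)) ∪ (G ∩ H) ⊆ G :=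
            union_subset (fun x hx => hx.2.2) inter_subset_left
          exact hGflat.closure ▸ M.closure_subset_closure h1
        · exact M.closure_subset_closure
            (union_subset_union_left _ (fun x hx => ⟨hx.1, hx.2.1⟩))
      have hGHdflat : M.IsFlat (G ∩ Hd) := flat_inter hGflat hHdhyp.1
      have hWeq : W = G ∩ Hd :=
        flat_eq_of_subset_mrank_le (flat_closure M _) hGHdflat.subset_ground hWsub
          (by omega)
      have hWH : W ⊆ H := by
        have h1 : (A ∩ (B ∩ G)) ∪ (G ∩ H) ⊆ H := union_subset hFH inter_subset_right
        exact hH.1.closure ▸ M.closure_subset_closure h1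
      refine IH (Hd :: t) (by simp only [List.length_cons]; omega)
        (fun C hC => by rcases List.mem_cons.mp hC with h | h; exacts [h ▸ hHdS, htmem C h]) H hH ?_
      intro x hx
      have hx' : x ∈ G ∩ Hd := ⟨hx.2, hx.1⟩
      rw [← hWeq] at hx'
      exact hWH hx'

end Main

/-- for a simple modular matroid, `X ↦ {H hyperplane | X ⊆ H}` is
an isomorphism from the opposite of the flat lattice onto the extension
lattice (the lattice of linear subclasses). -/
theorem statement_8 {M : Matroid α} [M.Finite] {r : ℕ} (hr : mrk M = r)
    (hM : Simple M) (hmod : Modular M) :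
    (∀ X, M.IsFlat X → LinearSubclass M {H | IsHyperplane M H ∧ X ⊆ H}) ∧
    (∀ X Y, M.IsFlat X → M.IsFlat Y →
      (Y ⊆ X ↔ {H | IsHyperplane M H ∧ X ⊆ H} ⊆ {H | IsHyperplane M H ∧ Y ⊆ H})) ∧
    ∀ S, LinearSubclass M S →
      ∃ X, M.IsFlat X ∧ {H | IsHyperplane M H ∧ X ⊆ H} = S := by
  refine ⟨?_, ?_, ?_⟩
  · intro X hX
    exact ⟨fun H hH => hH.1,
      fun H₁ h₁ H₂ h₂ _ H₃ hH₃ hsub => ⟨hH₃, fun x hx => hsub ⟨h₁.2 hx, h₂.2 hx⟩⟩⟩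
  · intro X Y hX hY
    constructor
    · intro hYX H hH
      exact ⟨hH.1, hYX.trans hH.2⟩
    · intro h y hy
      by_contra hyX
      have hyE : y ∈ M.E := hY.subset_ground hy
      obtain ⟨H, hHhyp, hXH, hyH⟩ := exists_hyperplane_sep hX hyE hyX
      exact hyH ((h ⟨hHhyp, hXH⟩).2 hy)
  · intro S hS
    have hSfin : S.Finite :=
      Set.Finite.subset (M.ground_finite.finite_subsets)
        (fun H hH => (hS.1 H hH).1.subset_ground)
    set l := hSfin.toFinset.toList with hl
    have hmem : ∀ A, A ∈ l ↔ A ∈ S := fun A =>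
      (Finset.mem_toList).trans hSfin.mem_toFinset
    refine ⟨interList M l, interList_flat (fun A hA => (hS.1 A ((hmem A).mp hA)).1), ?_⟩
    apply subset_antisymm
    · rintro H ⟨hH, hsub⟩
      exact subclass_closed hmod hS l.length l le_rfl (fun A hA => (hmem A).mp hA) H hH hsub
    · intro A hA
      exact ⟨hS.1 A hA, interList_subset ((hmem A).mpr hA)⟩

end AdjointPaper
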